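/- Equip ℕ with the topology in which a set is open if and only if it is downward closed. Let E = {n ∈ ℕ : n is even}, O = {n ∈ ℕ : n is odd}, and define recursively E₀ = E and E_j = E_{j−1} ∩ closure(closure(E_{j−1}) ∩ O) for j ≥ 1. Then E_j = {n ∈ ℕ : n is even and 2j ≤ n} = E ∩ [2j, ∞) for every j ∈ ℕ. -/
import Mathlib


/-- The topology on `ℕ` in which a set is open if and only if it is downward closed
(the lower Alexandrov topology of the usual order). -/
def lowerTopology : TopologicalSpace ℕ where
  IsOpen U := ∀ ⦃m n : ℕ⦄, n ∈ U → m ≤ n → m ∈ U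
  isOpen_univ := fun _ _ _ _ => trivial
  isOpen_inter := fun _ _ hs ht _ _ hn hmn => ⟨hs hn.1 hmn, ht hn.2 hmn⟩
  isOpen_sUnion := fun _ hS _ _ hn hmn => by
    obtain ⟨s, hsS, hns⟩ := hn
    exact ⟨s, hsS, hS s hsS hns hmn⟩

/-- The recursively defined sets `E₀ = E` (the evens) and
`E_j = E_{j−1} ∩ k(k E_{j−1} ∩ O)` for `j ≥ 1`, where `O` is the odds and `k` is the
closure in the lower topology on `ℕ`. -/
def kuratowskiE : ℕ → Set ℕ
  | 0 => {n : ℕ | Even n}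
  | j + 1 => kuratowskiE j ∩
      @closure ℕ lowerTopology (@closure ℕ lowerTopology (kuratowskiE j) ∩ {n : ℕ | Odd n})

lemma lower_closure_eq (S : Set ℕ) :
    @closure ℕ lowerTopology S = {n | ∃ s ∈ S, s ≤ n} := by
  letI : TopologicalSpace ℕ := lowerTopology
  apply subset_antisymm
  · apply closure_minimal
    · intro s hs; exact ⟨s, hs, le_refl s⟩
    · exact { isOpen_compl := fun m n hn hmn h => hn ⟨h.choose, h.choose_spec.1, h.choose_spec.2.trans hmn⟩ }
  · rintro n ⟨s, hs, hsn⟩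
    by_contra hn
    have hopen := (isClosed_closure (s := S)).isOpen_compl
    exact hopen hn hsn (subset_closure hs)

/-- With `E₀ = E` the evens, `O` the odds, and `E_j = E_{j−1} ∩ k(k E_{j−1} ∩ O)`, one has
`E_j = {n : Even n ∧ 2j ≤ n} = E ∩ [2j, ∞)` for every `j`. -/
theorem kuratowskiE_eq (j : ℕ) :
    kuratowskiE j = {n : ℕ | Even n ∧ 2 * j ≤ n} := by
  induction j with
  | zero =>
    ext n; simp [kuratowskiE]
  | succ j ih =>
    ext n
    simp only [kuratowskiE, ih, lower_closure_eq, Set.mem_inter_iff, Set.mem_setOf_eq]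
    constructor
    · rintro ⟨⟨hev, hle⟩, s, ⟨⟨t, ⟨htev, htle⟩, hts⟩, hodd⟩, hsn⟩
      refine ⟨hev, ?_⟩
      rcases hodd with ⟨k, hk⟩
      rcases hev with ⟨m, hm⟩
      omega
    · rintro ⟨hev, hle⟩
      refine ⟨⟨hev, by omega⟩, 2 * j + 1, ⟨⟨2 * j, ⟨⟨j, by ring⟩, le_refl _⟩, by omega⟩, ⟨j, by ring⟩⟩, ?_⟩
      rcases hev with ⟨m, hm⟩
      omega
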